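/- (Schur product theorem) If $A$ and $B$ are $n \times n$ positive semidefinite real matrices, then their entrywise (Hadamard) product $A \circ B$, with $(A \circ B)_{ij} = A_{ij} B_{ij}$, is positive semidefinite. -/

import Mathlib

theorem stmt_1 {n : ℕ} (A B : Matrix (Fin n) (Fin n) ℝ)
    (hA : A.PosSemidef) (hB : B.PosSemidef) :
    (Matrix.of fun i j => A i j * B i j).PosSemidef := by
  obtain ⟨C, hC⟩ : ∃ C : Matrix (Fin n) (Fin n) ℝ, A = C.conjTranspose * C := by
    open scoped MatrixOrder in exact CStarAlgebra.nonneg_iff_eq_star_mul_self.mp hA.nonneg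
  rw [Matrix.posSemidef_iff_dotProduct_mulVec]
  constructor
  · ext i j
    simp only [Matrix.IsHermitian, Matrix.conjTranspose] at *
    have h1 := congrFun (congrFun hA.1 i) j
    have h2 := congrFun (congrFun hB.1 i) j
    simp [Matrix.transpose_apply, Matrix.map_apply] at h1 h2 ⊢
    rw [h1, h2]
  · intro x
    have key : dotProduct (star x) (Matrix.mulVec (Matrix.of fun i j => A i j * B i j) x)
        = ∑ k, dotProduct (star (fun i => C k i * x i))
            (Matrix.mulVec B (fun i => C k i * x i)) := by
      subst hC
      simp only [dotProduct, Matrix.mulVec, Matrix.of_apply, Matrix.mul_apply,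
        Matrix.conjTranspose_apply, star, id_eq, Finset.sum_mul, Finset.mul_sum]
      refine Eq.trans (Finset.sum_congr rfl fun a _ => Finset.sum_comm) ?_
      rw [Finset.sum_comm]
      refine Finset.sum_congr rfl fun k _ => Finset.sum_congr rfl fun i _ =>
        Finset.sum_congr rfl fun j _ => ?_
      ring
    rw [key]
    exact Finset.sum_nonneg fun k _ => hB.dotProduct_mulVec_nonneg _
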